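/- Let A be a bounded operator on the model space K_Θ for an inner function Θ. Then S_Θ* A S_Θ = A if and only if A = 0. -/

import Mathlib

noncomputable section

open Complex Filter Topology ContinuousLinearMap
open scoped ENNReal

/-- The Hardy space `H²`, modeled as the space of square-summable Taylor coefficient
sequences. -/
abbrev H2 : Type := lp (fun _ : ℕ => ℂ) 2

/-- The shifted coefficient sequence, i.e. the Taylor coefficients of `z • f`. -/
def shiftFun (f : ∀ _ : ℕ, ℂ) : ∀ _ : ℕ, ℂ
  | 0 => 0
  | n + 1 => f n

lemma shiftFun_memℓp (f : H2) : Memℓp (shiftFun f) 2 := by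
  apply memℓp_gen
  have hf : Summable fun n => ‖(f : ∀ _ : ℕ, ℂ) n‖ ^ (2 : ℝ≥0∞).toReal :=
    Memℓp.summable (by norm_num) (lp.memℓp f)
  refine (summable_nat_add_iff 1).1 ?_
  simpa [shiftFun] using hf

lemma shiftFun_tsum (f : H2) :
    (∑' n, ‖shiftFun f n‖ ^ (2 : ℝ≥0∞).toReal)
      = ∑' n, ‖(f : ∀ _ : ℕ, ℂ) n‖ ^ (2 : ℝ≥0∞).toReal := by
  rw [Summable.tsum_eq_zero_add ((shiftFun_memℓp f).summable (by norm_num))]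
  simp [shiftFun]

/-- The unilateral shift `S f = z • f` on `H²`. -/
def shift : H2 →L[ℂ] H2 := by
  refine LinearMap.mkContinuous
    { toFun := fun f => ⟨shiftFun f, shiftFun_memℓp f⟩
      map_add' := ?_
      map_smul' := ?_ } 1 ?_
  · intro f g; ext n
    change shiftFun (↑(f + g)) n = shiftFun f n + shiftFun g n
    cases n <;> simp [shiftFun]
  · intro c f; ext n; cases n <;> simp [shiftFun]
  · intro f
    rw [one_mul]
    apply le_of_eq
    rw [lp.norm_eq_tsum_rpow (by norm_num) , lp.norm_eq_tsum_rpow (by norm_num) f]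
    congr 1
    exact shiftFun_tsum f

/-- An inner function `Θ`, encoded by the multiplication operator `f ↦ Θ f` on `H²`:
an operator commutes with the shift iff it is multiplication by a bounded analytic
function `Θ`, and this multiplication is isometric on `H²` iff `Θ` is inner. -/
structure InnerFunction where
  /-- The multiplication operator `f ↦ Θ f` on `H²`. -/
  mul : H2 →L[ℂ] H2
  /-- Multiplication by `Θ` commutes with the shift (i.e. `Θ ∈ H^∞`). -/
  comm : mul ∘L shift = shift ∘L mul
  /-- `Θ` has unimodular boundary values a.e., i.e. multiplication by `Θ` is isometric. -/
  isom : ∀ f : H2, ‖mul f‖ = ‖f‖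

/-- The subspace `Θ H²` of `H²`. -/
def thetaH2 (Θ : InnerFunction) : Submodule ℂ H2 := LinearMap.range (Θ.mul : H2 →ₗ[ℂ] H2)

/-- The model space `K_Θ = H² ⊖ Θ H²`. -/
def Ksp (Θ : InnerFunction) : Submodule ℂ H2 := (thetaH2 Θ)ᗮ

instance (Θ : InnerFunction) : CompleteSpace (Ksp Θ) :=
  (Submodule.isClosed_orthogonal _).completeSpace_coe

/-- The orthogonal projection `P_Θ` of `H²` onto the model space `K_Θ`. -/
def projK (Θ : InnerFunction) : H2 →L[ℂ] Ksp Θ := (Ksp Θ).orthogonalProjectionOnto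

/-- The compressed shift `S_Θ = P_Θ S |_{K_Θ}` on the model space. -/
def Sc (Θ : InnerFunction) : Ksp Θ →L[ℂ] Ksp Θ :=
  projK Θ ∘L (shift ∘L (Ksp Θ).subtypeL)

/-- The constant function `1 ∈ H²`. -/
def one' : H2 := lp.single 2 0 1

/-- Evaluation of (the analytic extension of) `f ∈ H²` at a point `λ` of the disk:
`f(λ) = ∑ aₙ λⁿ`. -/
def evalAt (f : H2) (l : ℂ) : ℂ := ∑' n : ℕ, (f : ∀ _ : ℕ, ℂ) n * l ^ n

/-- The value `Θ(λ)` of the inner function at a point of the disk. -/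
def IFval (Θ : InnerFunction) (l : ℂ) : ℂ := evalAt (Θ.mul one') l

/-- The Szegő (Cauchy) kernel `c_λ(z) = 1/(1 - conj(λ) z)`, with Taylor coefficients
`conj(λ)ⁿ`, as an element of `H²`. -/
def szego (l : ℂ) : H2 := ∑' n : ℕ, (starRingEnd ℂ l) ^ n • lp.single 2 n 1

/-- The reproducing kernel `k_λ = P_Θ c_λ` of `K_Θ`,
`k_λ(z) = (1 - conj(Θ(λ)) Θ(z))/(1 - conj(λ) z)`. -/
def kern (Θ : InnerFunction) (l : ℂ) : Ksp Θ := projK Θ (szego l)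

/-- The reproducing kernel of `K_Θ` at `0`, `k₀(z) = 1 - conj(Θ(0)) Θ(z)`. -/
def kern0 (Θ : InnerFunction) : Ksp Θ := projK Θ one'

/-- The conjugate kernel `k̃_λ(z) = (Θ(z) - Θ(λ))/(z - λ)`, an element of `K_Θ`.
In terms of the backward shift, `k̃_λ = ∑_j λ^j S*^(j+1) Θ`, which lies in `K_Θ`
(so applying `P_Θ` does not change it). -/
def ckern (Θ : InnerFunction) (l : ℂ) : Ksp Θ :=
  projK Θ (∑' j : ℕ, l ^ j • ((ContinuousLinearMap.adjoint shift) ^ (j + 1)) (Θ.mul one'))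

/-- The rank-one operator `(u ⊗ v) f = ⟨f, v⟩ u` (inner product linear in `f`). -/
def rankOne {E : Type*} [NormedAddCommGroup E] [InnerProductSpace ℂ E]
    (u v : E) : E →L[ℂ] E := (innerSL ℂ v).smulRight u

-- ===== auxiliary lemmas =====

lemma shift_coeFn (f : H2) : ((shift f : H2) : ∀ _ : ℕ, ℂ) = shiftFun f := rfl

lemma norm_shift (f : H2) : ‖shift f‖ = ‖f‖ := by
  rw [lp.norm_eq_tsum_rpow (by norm_num : (0:ℝ) < (2:ℝ≥0∞).toReal),
    lp.norm_eq_tsum_rpow (by norm_num : (0:ℝ) < (2:ℝ≥0∞).toReal) f]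
  congr 1
  exact shiftFun_tsum f

/-- `Θ` as a linear isometry. -/
def ThIso (Θ : InnerFunction) : H2 →ₗᵢ[ℂ] H2 :=
  ⟨(Θ.mul : H2 →ₗ[ℂ] H2), Θ.isom⟩

lemma theta_inner (Θ : InnerFunction) (f g : H2) :
    (inner ℂ (Θ.mul f) (Θ.mul g) : ℂ) = inner ℂ f g :=
  (ThIso Θ).inner_map_map f g

lemma adj_theta_theta (Θ : InnerFunction) (f : H2) :
    ContinuousLinearMap.adjoint Θ.mul (Θ.mul f) = f := by
  apply ext_inner_right ℂ
  intro v
  rw [ContinuousLinearMap.adjoint_inner_left]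
  exact theta_inner Θ f v

lemma thetaH2_isClosed (Θ : InnerFunction) : IsClosed ((thetaH2 Θ : Submodule ℂ H2) : Set H2) := by
  have : (thetaH2 Θ : Set H2) = Set.range Θ.mul := by
    ext x; simp only [thetaH2, LinearMap.mem_range, Set.mem_range]; rfl
  rw [this]
  exact ((ThIso Θ).isometry.isClosedEmbedding).isClosed_range

lemma KspOrth (Θ : InnerFunction) : (Ksp Θ)ᗮ = thetaH2 Θ := by
  rw [Ksp, Submodule.orthogonal_orthogonal_eq_closure]
  exact (IsClosed.submodule_topologicalClosure_eq (thetaH2_isClosed Θ))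

lemma projK_coe (Θ : InnerFunction) (x : H2) :
    ((projK Θ x : Ksp Θ) : H2) = x - Θ.mul (ContinuousLinearMap.adjoint Θ.mul x) := by
  show (Ksp Θ).starProjection x = _
  apply Submodule.eq_starProjection_of_mem_orthogonal
  · -- membership in Ksp = (thetaH2)ᗮ
    intro u hu
    obtain ⟨g, rfl⟩ : ∃ g, Θ.mul g = u := hu
    rw [inner_sub_right, ← ContinuousLinearMap.adjoint_inner_right (A := Θ.mul),
      theta_inner, ContinuousLinearMap.adjoint_inner_right, sub_self]
  · rw [KspOrth]
    have : x - (x - Θ.mul (ContinuousLinearMap.adjoint Θ.mul x))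
        = Θ.mul (ContinuousLinearMap.adjoint Θ.mul x) := by abel
    rw [this]
    exact ⟨_, rfl⟩

lemma normsq_projK (Θ : InnerFunction) (x : H2) :
    ‖(projK Θ x : H2)‖ ^ 2 = ‖x‖ ^ 2 - ‖ContinuousLinearMap.adjoint Θ.mul x‖ ^ 2 := by
  rw [projK_coe]
  have h := @norm_sub_sq ℂ _ _ _ _ x (Θ.mul (ContinuousLinearMap.adjoint Θ.mul x))
  rw [h]
  have h1 : (RCLike.re (inner ℂ x (Θ.mul (ContinuousLinearMap.adjoint Θ.mul x)) : ℂ))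
      = ‖ContinuousLinearMap.adjoint Θ.mul x‖ ^ 2 := by
    rw [← ContinuousLinearMap.adjoint_inner_left]
    rw [← inner_self_eq_norm_sq (𝕜 := ℂ)]
  rw [h1, Θ.isom]
  ring

lemma shift_single (k : ℕ) (c : ℂ) :
    shift (lp.single 2 k c) = lp.single 2 (k + 1) c := by
  ext n
  cases n with
  | zero =>
    rw [shift_coeFn]
    show (0 : ℂ) = _
    rw [lp.single_apply]
    rw [Pi.single_eq_of_ne (by omega : (0 : ℕ) ≠ k + 1)]
  | succ m =>
    rw [shift_coeFn]
    show (lp.single 2 k c : ∀ _ : ℕ, ℂ) m = (lp.single 2 (k+1) c : ∀ _ : ℕ, ℂ) (m+1)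
    rw [lp.single_apply, lp.single_apply]
    by_cases h : m = k
    · subst h; rw [Pi.single_eq_same, Pi.single_eq_same]
    · rw [Pi.single_eq_of_ne h, Pi.single_eq_of_ne (by omega : m + 1 ≠ k + 1)]

lemma shift_pow_coeFn (n : ℕ) (f : H2) (j : ℕ) :
    (((shift ^ n) f : H2) : ∀ _ : ℕ, ℂ) j = if n ≤ j then (f : ∀ _ : ℕ, ℂ) (j - n) else 0 := by
  induction n generalizing j with
  | zero => simp
  | succ m ih =>
    rw [pow_succ', ContinuousLinearMap.mul_apply, shift_coeFn]
    cases j with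
    | zero => simp [shiftFun]
    | succ i =>
      show (((shift ^ m) f : H2) : ∀ _ : ℕ, ℂ) i = _
      rw [ih i]
      simp only [Nat.succ_sub_succ]
      congr 1
      simp [Nat.succ_le_succ_iff]

lemma single_eq_shift_pow_one' (k : ℕ) :
    lp.single 2 k (1 : ℂ) = (shift ^ k) one' := by
  induction k with
  | zero => rfl
  | succ m ih => rw [pow_succ', ContinuousLinearMap.mul_apply, ← ih, shift_single]

lemma theta_comm_pow (Θ : InnerFunction) (n : ℕ) (f : H2) :
    Θ.mul ((shift ^ n) f) = (shift ^ n) (Θ.mul f) := by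
  induction n generalizing f with
  | zero => simp
  | succ m ih =>
    have hc : ∀ g, Θ.mul (shift g) = shift (Θ.mul g) := fun g => by
      have := ContinuousLinearMap.ext_iff.mp Θ.comm g
      simpa using this
    rw [pow_succ, ContinuousLinearMap.mul_apply, ContinuousLinearMap.mul_apply, ih (shift f),
      hc f]

lemma theta_single (Θ : InnerFunction) (k : ℕ) :
    Θ.mul (lp.single 2 k (1 : ℂ)) = (shift ^ k) (Θ.mul one') := by
  rw [single_eq_shift_pow_one', theta_comm_pow]

lemma adj_theta_single_coe (Θ : InnerFunction) (m k : ℕ) :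
    ((ContinuousLinearMap.adjoint Θ.mul (lp.single 2 m (1:ℂ)) : H2) : ∀ _ : ℕ, ℂ) k
      = if k ≤ m then (starRingEnd ℂ) ((Θ.mul one' : ∀ _ : ℕ, ℂ) (m - k)) else 0 := by
  have h1 : ((ContinuousLinearMap.adjoint Θ.mul (lp.single 2 m (1:ℂ)) : H2) : ∀ _ : ℕ, ℂ) k
      = inner ℂ (lp.single 2 k (1:ℂ)) (ContinuousLinearMap.adjoint Θ.mul (lp.single 2 m (1:ℂ))) := by
    rw [lp.inner_single_left]
    simp
  rw [h1, ContinuousLinearMap.adjoint_inner_right, theta_single, lp.inner_single_right,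
    shift_pow_coeFn]
  by_cases h : k ≤ m
  · rw [if_pos h, if_pos h]; simp
  · rw [if_neg h, if_neg h]; simp

lemma normsq_adj_theta_single (Θ : InnerFunction) (m : ℕ) :
    ‖ContinuousLinearMap.adjoint Θ.mul (lp.single 2 m (1:ℂ))‖ ^ 2
      = ∑ j ∈ Finset.range (m + 1), ‖(Θ.mul one' : ∀ _ : ℕ, ℂ) j‖ ^ 2 := by
  have h := lp.norm_rpow_eq_tsum (p := 2) (by norm_num)
    (ContinuousLinearMap.adjoint Θ.mul (lp.single 2 m (1:ℂ)))
  have h2 : (2 : ℝ≥0∞).toReal = (2 : ℝ) := by norm_num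
  rw [h2] at h
  have h3 : ∀ x : ℝ, x ^ (2:ℝ) = x ^ (2:ℕ) := fun x => by
    rw [← Real.rpow_natCast x 2]; norm_num
  rw [h3] at h
  rw [h]
  have h4 : ∀ k : ℕ, k ∉ Finset.range (m+1) →
      ‖((ContinuousLinearMap.adjoint Θ.mul (lp.single 2 m (1:ℂ)) : H2) : ∀ _ : ℕ, ℂ) k‖ ^ (2:ℝ) = 0 := by
    intro k hk
    rw [adj_theta_single_coe, if_neg (by simp at hk; omega)]
    simp
  rw [tsum_eq_sum h4]
  rw [← Finset.sum_range_reflect (fun j => ‖(Θ.mul one' : ∀ _ : ℕ, ℂ) j‖ ^ 2) (m+1)]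
  apply Finset.sum_congr rfl
  intro k hk
  simp only [Finset.mem_range] at hk
  rw [adj_theta_single_coe, if_pos (by omega), h3]
  have hmk : m + 1 - 1 - k = m - k := by omega
  rw [hmk]
  simp

lemma summable_theta_sq (Θ : InnerFunction) :
    Summable (fun j => ‖(Θ.mul one' : ∀ _ : ℕ, ℂ) j‖ ^ 2) := by
  have := (lp.memℓp (Θ.mul one')).summable (p := 2) (by norm_num)
  have h2 : (2 : ℝ≥0∞).toReal = (2 : ℝ) := by norm_num
  rw [h2] at this
  convert this using 2 with j
  rw [← Real.rpow_natCast _ 2]; norm_num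

lemma tsum_theta_sq (Θ : InnerFunction) :
    ∑' j, ‖(Θ.mul one' : ∀ _ : ℕ, ℂ) j‖ ^ 2 = 1 := by
  have h := lp.norm_rpow_eq_tsum (p := 2) (by norm_num) (Θ.mul one')
  have h2 : (2 : ℝ≥0∞).toReal = (2 : ℝ) := by norm_num
  rw [h2] at h
  have h3 : ∀ x : ℝ, x ^ (2:ℝ) = x ^ (2:ℕ) := fun x => by
    rw [← Real.rpow_natCast x 2]; norm_num
  rw [h3] at h
  simp only [h3] at h
  rw [← h, Θ.isom]
  have hone : ‖one'‖ = 1 := by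
    have := lp.norm_single (p := 2) (E := fun _ : ℕ => ℂ) (by norm_num) 0 (1:ℂ)
    simpa [one'] using this
  rw [hone]; norm_num

lemma tendsto_normsq_projK_single (Θ : InnerFunction) :
    Filter.Tendsto (fun m => ‖(projK Θ (lp.single 2 m (1:ℂ)) : H2)‖) Filter.atTop (𝓝 0) := by
  have key : ∀ m : ℕ, ‖(projK Θ (lp.single 2 m (1:ℂ)) : H2)‖ ^ 2
      = 1 - ∑ j ∈ Finset.range (m + 1), ‖(Θ.mul one' : ∀ _ : ℕ, ℂ) j‖ ^ 2 := by
    intro m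
    rw [normsq_projK, normsq_adj_theta_single]
    congr 1
    have := lp.norm_single (p := 2) (E := fun _ : ℕ => ℂ) (by norm_num) m (1:ℂ)
    simp only [norm_one] at this
    rw [this]
    norm_num
  have hsum : Filter.Tendsto
      (fun m => ∑ j ∈ Finset.range (m + 1), ‖(Θ.mul one' : ∀ _ : ℕ, ℂ) j‖ ^ 2)
      Filter.atTop (𝓝 1) := by
    have := (summable_theta_sq Θ).hasSum.tendsto_sum_nat
    rw [tsum_theta_sq] at this
    exact this.comp (Filter.tendsto_add_atTop_nat 1)
  have hsq : Filter.Tendsto (fun m => ‖(projK Θ (lp.single 2 m (1:ℂ)) : H2)‖ ^ 2)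
      Filter.atTop (𝓝 0) := by
    simp only [key]
    have := (tendsto_const_nhds (x := (1:ℝ)) (f := Filter.atTop (α := ℕ))).sub hsum
    simpa using this
  have := hsq.sqrt
  simp only [Real.sqrt_zero] at this
  convert this using 2 with m
  rw [Real.sqrt_sq (norm_nonneg _)]

lemma shift_pow_single (n k : ℕ) (c : ℂ) :
    (shift ^ n) (lp.single 2 k c) = lp.single 2 (n + k) c := by
  induction n with
  | zero => simp
  | succ m ih =>
    rw [pow_succ', ContinuousLinearMap.mul_apply, ih, shift_single]
    congr 1
    omega

lemma norm_shift_pow (n : ℕ) (f : H2) : ‖(shift ^ n) f‖ = ‖f‖ := by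
  induction n with
  | zero => simp
  | succ m ih => rw [pow_succ', ContinuousLinearMap.mul_apply, norm_shift, ih]

lemma norm_projK_le (Θ : InnerFunction) (x : H2) : ‖(projK Θ x : H2)‖ ≤ ‖x‖ := by
  rw [← Submodule.coe_norm]
  calc ‖projK Θ x‖ ≤ ‖projK Θ‖ * ‖x‖ := (projK Θ).le_opNorm x
  _ ≤ 1 * ‖x‖ := by
      apply mul_le_mul_of_nonneg_right _ (norm_nonneg x)
      exact Submodule.orthogonalProjectionOnto_norm_le _
  _ = ‖x‖ := one_mul _

set_option maxHeartbeats 1000000 in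
lemma tendsto_projK_shift_pow (Θ : InnerFunction) (x : H2) :
    Filter.Tendsto (fun n => ‖(projK Θ ((shift ^ n) x) : H2)‖) Filter.atTop (𝓝 0) := by
  rw [Metric.tendsto_atTop]
  intro ε hε
  have hx := (lp.hasSum_single (E := fun _ : ℕ => ℂ) (p := 2) (by norm_num) x).tendsto_sum_nat
  obtain ⟨K, hK⟩ := (Metric.tendsto_atTop.mp hx (ε / 2) (by positivity)) 
  have hK' : ‖(∑ i ∈ Finset.range K, lp.single 2 i ((x : ∀ _ : ℕ, ℂ) i)) - x‖ < ε / 2 := by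
    have := hK K le_rfl
    rwa [dist_eq_norm] at this
  set y : H2 := ∑ i ∈ Finset.range K, lp.single 2 i ((x : ∀ _ : ℕ, ℂ) i) with hy
  have hg : Filter.Tendsto
      (fun n => ∑ i ∈ Finset.range K,
        ‖(x : ∀ _ : ℕ, ℂ) i‖ * ‖(projK Θ (lp.single 2 (n + i) (1:ℂ)) : H2)‖)
      Filter.atTop (𝓝 0) := by
    have h0 : (0:ℝ) = ∑ i ∈ Finset.range K, (0:ℝ) := by simp
    rw [h0]
    refine tendsto_finset_sum _ (fun i _ => ?_)
    have h1 : Filter.Tendsto (fun n => ‖(projK Θ (lp.single 2 (n + i) (1:ℂ)) : H2)‖)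
        Filter.atTop (𝓝 0) :=
      (tendsto_normsq_projK_single Θ).comp (Filter.tendsto_add_atTop_nat i)
    simpa using h1.const_mul (‖(x : ∀ _ : ℕ, ℂ) i‖)
  obtain ⟨N, hN⟩ := (Metric.tendsto_atTop.mp hg (ε / 2) (by positivity))
  refine ⟨N, fun n hn => ?_⟩
  rw [Real.dist_eq, sub_zero, _root_.abs_of_nonneg (norm_nonneg _)]
  have hbound : ‖(projK Θ ((shift ^ n) x) : H2)‖
      ≤ (∑ i ∈ Finset.range K,
        ‖(x : ∀ _ : ℕ, ℂ) i‖ * ‖(projK Θ (lp.single 2 (n + i) (1:ℂ)) : H2)‖) + ‖y - x‖ := by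
    have hxy : x = y + (x - y) := by abel
    have hsplit : projK Θ ((shift ^ n) x)
        = projK Θ ((shift ^ n) y) + projK Θ ((shift ^ n) (x - y)) := by
      conv_lhs => rw [hxy]
      rw [map_add, map_add]
    rw [hsplit]
    rw [Submodule.coe_add]
    refine le_trans (norm_add_le _ _) (add_le_add ?_ ?_)
    · -- bound on y-part
      have hyexp : projK Θ ((shift ^ n) y)
          = ∑ i ∈ Finset.range K,
            ((x : ∀ _ : ℕ, ℂ) i) • projK Θ (lp.single 2 (n + i) (1:ℂ)) := by
        rw [hy, map_sum, map_sum]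
        apply Finset.sum_congr rfl
        intro i _
        rw [shift_pow_single]
        have hsm : lp.single (E := fun _ : ℕ => ℂ) 2 (n + i) ((x : ∀ _ : ℕ, ℂ) i)
            = ((x : ∀ _ : ℕ, ℂ) i) • lp.single (E := fun _ : ℕ => ℂ) 2 (n + i) (1:ℂ) := by
          rw [← lp.single_smul]
          congr 1
          simp
        rw [hsm, map_smul]
      rw [hyexp]
      push_cast
      refine le_trans (norm_sum_le _ _) ?_
      apply Finset.sum_le_sum
      intro i _
      rw [norm_smul]
    · -- bound on remainder
      calc ‖(projK Θ ((shift ^ n) (x - y)) : H2)‖ ≤ ‖(shift ^ n) (x - y)‖ :=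
            norm_projK_le Θ _
      _ = ‖x - y‖ := norm_shift_pow n _
      _ = ‖y - x‖ := norm_sub_rev _ _
  have h1 : (∑ i ∈ Finset.range K,
      ‖(x : ∀ _ : ℕ, ℂ) i‖ * ‖(projK Θ (lp.single 2 (n + i) (1:ℂ)) : H2)‖) < ε / 2 := by
    have := hN n hn
    rw [Real.dist_eq, sub_zero] at this
    calc _ ≤ |∑ i ∈ Finset.range K,
        ‖(x : ∀ _ : ℕ, ℂ) i‖ * ‖(projK Θ (lp.single 2 (n + i) (1:ℂ)) : H2)‖| := le_abs_self _
    _ < ε / 2 := this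
  have h2 : ‖y - x‖ < ε / 2 := hK'
  linarith

lemma Sc_pow_eq (Θ : InnerFunction) (x : Ksp Θ) (n : ℕ) :
    ((Sc Θ) ^ n) x = projK Θ ((shift ^ n) (x : H2)) := by
  induction n with
  | zero =>
    simp only [pow_zero, ContinuousLinearMap.one_apply]
    exact (Submodule.orthogonalProjectionOnto_mem_subspace_eq_self x).symm
  | succ m ih =>
    rw [pow_succ', ContinuousLinearMap.mul_apply, ih]
    show projK Θ (shift ((projK Θ ((shift ^ m) (x : H2)) : H2))) = _
    set w : H2 := (shift ^ m) (x : H2) with hw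
    have hd : w - (projK Θ w : H2) ∈ (Ksp Θ)ᗮ := Submodule.sub_starProjection_mem_orthogonal (K := Ksp Θ) w
    rw [KspOrth] at hd
    obtain ⟨u, hu⟩ := hd
    have hcoe : (projK Θ w : H2) = w - Θ.mul u := by rw [show Θ.mul u = w - (projK Θ w : H2) from hu]; abel
    rw [hcoe, map_sub, map_sub]
    have hzero : projK Θ (shift (Θ.mul u)) = 0 := by
      apply Submodule.orthogonalProjectionOnto_apply_of_mem_orthogonal
      rw [KspOrth]
      have hc : ∀ g, Θ.mul (shift g) = shift (Θ.mul g) := fun g => by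
        have := ContinuousLinearMap.ext_iff.mp Θ.comm g
        simpa using this
      exact ⟨shift u, hc u⟩
    rw [hzero, sub_zero, pow_succ', ContinuousLinearMap.mul_apply]

lemma tendsto_Sc_pow (Θ : InnerFunction) (x : Ksp Θ) :
    Filter.Tendsto (fun n => ‖((Sc Θ) ^ n) x‖) Filter.atTop (𝓝 0) := by
  have := tendsto_projK_shift_pow Θ (x : H2)
  convert this using 2 with n
  rw [Sc_pow_eq, Submodule.coe_norm]

lemma norm_Sc_pow_le (Θ : InnerFunction) (x : Ksp Θ) (n : ℕ) :
    ‖((Sc Θ) ^ n) x‖ ≤ ‖x‖ := by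
  rw [Sc_pow_eq, Submodule.coe_norm]
  calc ‖(projK Θ ((shift ^ n) (x : H2)) : H2)‖ ≤ ‖(shift ^ n) (x : H2)‖ := norm_projK_le Θ _
  _ = ‖(x : H2)‖ := norm_shift_pow n _
  _ = ‖x‖ := (Submodule.coe_norm x).symm

set_option maxHeartbeats 2000000 in
/-- `S_Θ* A S_Θ = A` if and only if `A = 0`. -/
theorem toeplitz_identity_iff_zero (Θ : InnerFunction) (A : Ksp Θ →L[ℂ] Ksp Θ) :
    ContinuousLinearMap.adjoint (Sc Θ) ∘L A ∘L Sc Θ = A ↔ A = 0 := by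
  constructor
  · intro hA
    have hpow : ∀ n : ℕ, ContinuousLinearMap.adjoint ((Sc Θ) ^ n) ∘L A ∘L ((Sc Θ) ^ n) = A := by
      intro n
      induction n with
      | zero => ext x; simp [ContinuousLinearMap.one_def, ContinuousLinearMap.adjoint_id]
      | succ m ih =>
        ext x
        have h1 := ContinuousLinearMap.ext_iff.mp ih ((Sc Θ) x)
        have h2 := ContinuousLinearMap.ext_iff.mp hA x
        simp only [ContinuousLinearMap.comp_apply] at h1 h2 ⊢
        rw [pow_succ, show (Sc Θ ^ m * Sc Θ) = (Sc Θ ^ m) ∘L (Sc Θ) from rfl,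
          ContinuousLinearMap.adjoint_comp]
        simp only [ContinuousLinearMap.comp_apply]
        rw [h1, h2]
    refine ContinuousLinearMap.ext fun x => ?_
    rw [ContinuousLinearMap.zero_apply]
    have hb : ∀ n : ℕ, ‖A x‖ ^ 2 ≤ (‖A‖ * ‖x‖) * ‖((Sc Θ) ^ n) (A x)‖ := by
      intro n
      have h1 : A x = (ContinuousLinearMap.adjoint ((Sc Θ) ^ n) ∘L A ∘L ((Sc Θ) ^ n)) x := by
        rw [hpow n]
      calc ‖A x‖ ^ 2 = RCLike.re (inner ℂ (A x) (A x) : ℂ) := by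
            exact (inner_self_eq_norm_sq (𝕜 := ℂ) (A x)).symm
      _ = RCLike.re (inner ℂ ((ContinuousLinearMap.adjoint ((Sc Θ) ^ n) ∘L A ∘L ((Sc Θ) ^ n)) x)
            (A x) : ℂ) := by rw [← h1]
      _ = RCLike.re (inner ℂ (A (((Sc Θ) ^ n) x)) (((Sc Θ) ^ n) (A x)) : ℂ) := by
            rw [ContinuousLinearMap.comp_apply, ContinuousLinearMap.comp_apply,
              ContinuousLinearMap.adjoint_inner_left]
      _ ≤ ‖(inner ℂ (A (((Sc Θ) ^ n) x)) (((Sc Θ) ^ n) (A x)) : ℂ)‖ := RCLike.re_le_norm _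
      _ ≤ ‖A (((Sc Θ) ^ n) x)‖ * ‖((Sc Θ) ^ n) (A x)‖ := by exact norm_inner_le_norm (𝕜 := ℂ) (A (((Sc Θ) ^ n) x)) (((Sc Θ) ^ n) (A x))
      _ ≤ (‖A‖ * ‖x‖) * ‖((Sc Θ) ^ n) (A x)‖ := by
            apply mul_le_mul_of_nonneg_right _ (norm_nonneg _)
            calc ‖A (((Sc Θ) ^ n) x)‖ ≤ ‖A‖ * ‖((Sc Θ) ^ n) x‖ := A.le_opNorm _
            _ ≤ ‖A‖ * ‖x‖ := mul_le_mul_of_nonneg_left (norm_Sc_pow_le Θ x n) (norm_nonneg A)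
    by_contra hne
    have hApos : 0 < ‖A x‖ ^ 2 := by
      have : 0 < ‖A x‖ := norm_pos_iff.mpr hne
      positivity
    have hc : (0:ℝ) < ‖A‖ * ‖x‖ + 1 := by positivity
    obtain ⟨N, hN⟩ := (Metric.tendsto_atTop.mp (tendsto_Sc_pow Θ (A x)))
      (‖A x‖ ^ 2 / (‖A‖ * ‖x‖ + 1)) (by positivity)
    have h2 := hN N le_rfl
    rw [Real.dist_eq, sub_zero] at h2
    have h3 : ‖((Sc Θ) ^ N) (A x)‖ < ‖A x‖ ^ 2 / (‖A‖ * ‖x‖ + 1) :=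
      (le_abs_self _).trans_lt h2
    have h6 : ‖((Sc Θ) ^ N) (A x)‖ * (‖A‖ * ‖x‖ + 1) < ‖A x‖ ^ 2 :=
      (lt_div_iff₀ hc).mp h3
    have h4 := hb N
    nlinarith [norm_nonneg (((Sc Θ) ^ N) (A x)), norm_nonneg A, norm_nonneg x]
  · intro h
    rw [h]
    ext x
    simp
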